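/- The set U = {u ∈ ℂ* : e^u = 1 + u} is infinite. -/

import Mathlib

open Real Complex Set Metric

lemma key_sol (n : ℕ) : ∃ u : ℂ, (u ≠ 0 ∧ Complex.exp u = 1 + u) ∧
    |u.im - 2*Real.pi*((n:ℝ)+10)| ≤ 1 + Real.pi/2 := by
  have hπ3 : (3:ℝ) < Real.pi := Real.pi_gt_three
  have hπ4 : Real.pi ≤ 4 := Real.pi_le_four
  set t : ℝ := 2*Real.pi*((n:ℝ)+10) with ht_def
  have hn0 : (0:ℝ) ≤ (n:ℝ) := n.cast_nonneg
  have ht : 60 ≤ t := by nlinarith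
  set a : ℂ := (t:ℂ) * Complex.I with ha_def
  have ha_re : a.re = 0 := by simp [ha_def]
  have ha_im : a.im = t := by simp [ha_def]
  have h1a_re : (1 + a).re = 1 := by simp [ha_def]
  have h1a_im : (1 + a).im = t := by simp [ha_def]
  have habs_ge : t ≤ ‖1 + a‖ := by
    have := Complex.abs_im_le_norm (1 + a)
    rw [h1a_im] at this
    calc t ≤ |t| := le_abs_self t
    _ ≤ _ := this
  have habs_gt1 : 1 < ‖1 + a‖ := by linarith
  have habs_le : ‖1 + a‖ ≤ 1 + t := by
    have := Complex.norm_le_abs_re_add_abs_im (1 + a)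
    rw [h1a_re, h1a_im] at this
    calc ‖1+a‖ ≤ |1| + |t| := this
    _ = 1 + t := by rw [abs_one, _root_.abs_of_nonneg (by linarith : (0:ℝ) ≤ t)]
  have harg0 : 0 ≤ Complex.arg (1 + a) := Complex.arg_nonneg_iff.2 (by rw [h1a_im]; linarith)
  have harg2 : Complex.arg (1 + a) ≤ Real.pi / 2 :=
    Complex.arg_le_pi_div_two_iff.2 (Or.inl (by rw [h1a_re]; norm_num))
  -- bound on ‖log (1+a)‖
  have hlog1a : ‖Complex.log (1 + a)‖ ≤ Real.log (1 + t) + Real.pi := by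
    have h1 : ‖Complex.log (1+a)‖ ≤ |(Complex.log (1+a)).re| + |(Complex.log (1+a)).im| :=
      Complex.norm_le_abs_re_add_abs_im _
    rw [Complex.log_re, Complex.log_im] at h1
    have h2 : |Real.log (‖1+a‖)| = Real.log (‖1+a‖) :=
      abs_of_nonneg (Real.log_nonneg (by linarith))
    have h3 : Real.log (‖1+a‖) ≤ Real.log (1 + t) :=
      Real.log_le_log (by linarith) habs_le
    have h4 := Complex.abs_arg_le_pi (1 + a)
    calc ‖Complex.log (1+a)‖ = ‖Complex.log (1+a)‖ := rfl
    _ ≤ |Real.log (‖1+a‖)| + |Complex.arg (1+a)| := h1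
    _ ≤ Real.log (1 + t) + Real.pi := by rw [h2]; linarith
  -- the numerical inequality
  have hnum : 1 + (Real.log (1 + t) + Real.pi) ≤ t - 2 := by
    have hs0 : (0:ℝ) ≤ 1 + t := by linarith
    have hsq : Real.sqrt (1 + t) ^ 2 = 1 + t := Real.sq_sqrt hs0
    have hspos : 0 < Real.sqrt (1 + t) := Real.sqrt_pos.2 (by linarith)
    have hlog : Real.log (1 + t) ≤ 2 * (Real.sqrt (1 + t) - 1) := by
      have h1 : Real.log (Real.sqrt (1 + t)) = Real.log (1 + t) / 2 := Real.log_sqrt hs0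
      have h2 : Real.log (Real.sqrt (1 + t)) ≤ Real.sqrt (1 + t) - 1 :=
        Real.log_le_sub_one_of_pos hspos
      linarith
    nlinarith [sq_nonneg (Real.sqrt (1 + t) - 7)]
  set c : ℂ := Complex.log (1 + a) + a with hc_def
  have hc_re : c.re = Real.log (‖1 + a‖) := by
    simp [hc_def, Complex.add_re, Complex.log_re, ha_re]
  have hc_im : c.im = Complex.arg (1 + a) + t := by
    simp [hc_def, Complex.add_im, Complex.log_im, ha_im]
  have hc_re_pos : 0 < c.re := by rw [hc_re]; exact Real.log_pos habs_gt1
  set f : ℂ → ℂ := fun u => Complex.log (1 + u) + a with hf_def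
  set D : Set ℂ := Metric.closedBall c 1 with hD_def
  set S : Set ℂ := {z : ℂ | 0 < z.re} ∩ {z : ℂ | t - 2 ≤ z.im} with hS_def
  have hconv : Convex ℝ S := (convex_halfSpace_re_gt 0).inter (convex_halfSpace_im_ge (t - 2))
  -- members of D shifted by 1 lie in S
  have hmemS : ∀ u ∈ D, (1 + u) ∈ S := by
    intro u hu
    rw [hD_def, Metric.mem_closedBall, dist_eq_norm] at hu
    have hre : |(u - c).re| ≤ 1 := le_trans (Complex.abs_re_le_norm _) hu
    have him : |(u - c).im| ≤ 1 := le_trans (Complex.abs_im_le_norm _) hu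
    rw [Complex.sub_re] at hre
    rw [Complex.sub_im] at him
    have h1 := abs_le.1 hre
    have h2 := abs_le.1 him
    constructor
    · show 0 < (1 + u).re
      rw [Complex.add_re, Complex.one_re]
      linarith [h1.1]
    · show t - 2 ≤ (1 + u).im
      rw [Complex.add_im, Complex.one_im]
      rw [hc_im] at h2
      have := h2.1
      linarith
  have h1aS : (1 + a) ∈ S := by
    constructor
    · show 0 < (1+a).re; rw [h1a_re]; norm_num
    · show t - 2 ≤ (1+a).im; rw [h1a_im]; linarith
  -- Lipschitz estimate for log on S
  have hlip : ∀ x ∈ S, ∀ y ∈ S, ‖Complex.log y - Complex.log x‖ ≤ (t-2)⁻¹ * ‖y - x‖ := by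
    intro x hx y hy
    refine hconv.norm_image_sub_le_of_norm_hasDerivWithin_le (f' := fun z => z⁻¹)
      (fun z hz => ?_) (fun z hz => ?_) hx hy
    · have hzre : 0 < z.re := hz.1
      exact (Complex.hasDerivAt_log (Or.inl hzre)).hasDerivWithinAt
    · have hzim : t - 2 ≤ z.im := hz.2
      have habsz : t - 2 ≤ ‖z‖ := by
        have := Complex.abs_im_le_norm z
        have : z.im ≤ ‖z‖ := le_trans (le_abs_self _) this
        linarith
      have ht2 : (0:ℝ) < t - 2 := by linarith
      rw [norm_inv]
      have : (‖z‖)⁻¹ ≤ (t-2)⁻¹ := by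
        apply inv_anti₀ ht2 habsz
      simpa using this
  have hKlt : (t-2)⁻¹ < 1 := by
    rw [inv_lt_one_iff₀]; right; linarith
  -- f maps D to D
  have hmaps : Set.MapsTo f D D := by
    intro u hu
    have h1u : (1 + u) ∈ S := hmemS u hu
    rw [hD_def, Metric.mem_closedBall, dist_eq_norm]
    have hfc : f u - c = Complex.log (1 + u) - Complex.log (1 + a) := by
      show Complex.log (1 + u) + a - (Complex.log (1 + a) + a) = _
      ring
    rw [hfc]
    have h1 : ‖Complex.log (1+u) - Complex.log (1+a)‖ ≤ (t-2)⁻¹ * ‖(1+u) - (1+a)‖ :=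
      hlip _ h1aS _ h1u
    have h2 : ‖(1+u) - (1+a)‖ = ‖u - a‖ := by ring_nf
    have h3 : ‖u - a‖ ≤ 1 + ‖Complex.log (1+a)‖ := by
      have hca : c - a = Complex.log (1+a) := by rw [hc_def]; ring
      calc ‖u - a‖ = ‖(u - c) + (c - a)‖ := by ring_nf
      _ ≤ ‖u - c‖ + ‖c - a‖ := norm_add_le _ _
      _ ≤ 1 + ‖Complex.log (1+a)‖ := by
          rw [hca]
          have := hu; rw [hD_def, Metric.mem_closedBall, dist_eq_norm] at this
          linarith
    have h4 : ‖u - a‖ ≤ t - 2 := by linarith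
    have ht2 : (0:ℝ) < t - 2 := by linarith
    calc ‖Complex.log (1+u) - Complex.log (1+a)‖ ≤ (t-2)⁻¹ * ‖u - a‖ := by rw [← h2]; exact h1
    _ ≤ (t-2)⁻¹ * (t-2) := by gcongr
    _ = 1 := by field_simp
  -- contraction
  have ht2 : (0:ℝ) < t - 2 := by linarith
  set K : NNReal := ⟨(t-2)⁻¹, by positivity⟩ with hK_def
  have hcontr : ContractingWith K (hmaps.restrict f D D) := by
    constructor
    · rw [← NNReal.coe_lt_one]; exact hKlt
    · apply LipschitzOnWith.mapsToRestrict
      apply LipschitzOnWith.of_dist_le_mul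
      intro x hx y hy
      have h1x : (1 + x) ∈ S := hmemS x hx
      have h1y : (1 + y) ∈ S := hmemS y hy
      have h1 : ‖Complex.log (1+x) - Complex.log (1+y)‖ ≤ (t-2)⁻¹ * ‖(1+x) - (1+y)‖ :=
        hlip _ h1y _ h1x
      have h2 : f x - f y = Complex.log (1+x) - Complex.log (1+y) := by
        show Complex.log (1 + x) + a - (Complex.log (1 + y) + a) = _
        ring
      have h3 : ‖(1+x) - (1+y)‖ = ‖x - y‖ := by ring_nf
      rw [h3] at h1
      rw [dist_eq_norm, dist_eq_norm, h2]
      calc ‖Complex.log (1+x) - Complex.log (1+y)‖ ≤ (t-2)⁻¹ * ‖x - y‖ := h1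
      _ = (K : ℝ) * ‖x - y‖ := rfl
  have hcD : c ∈ D := Metric.mem_closedBall_self (by norm_num)
  obtain ⟨u, huD, hfix, -, -⟩ := ContractingWith.exists_fixedPoint'
    (Metric.isClosed_closedBall.isComplete) hmaps hcontr hcD (edist_ne_top _ _)
  -- properties of the fixed point
  have h1uS : (1 + u) ∈ S := hmemS u huD
  have h1u_ne : (1 : ℂ) + u ≠ 0 := by
    intro h
    have : (0:ℝ) < (1 + u).re := h1uS.1
    rw [h] at this
    simp at this
  have hfixu : Complex.log (1 + u) + a = u := hfix
  have hexpa : Complex.exp a = 1 := by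
    have : a = ((n + 10 : ℕ) : ℂ) * (2 * Real.pi * Complex.I) := by
      rw [ha_def, ht_def]; push_cast; ring
    rw [this, Complex.exp_nat_mul_two_pi_mul_I]
  have hexp : Complex.exp u = 1 + u := by
    have h5 : Complex.exp (Complex.log (1 + u) + a) = Complex.exp u := congrArg _ hfixu
    rw [Complex.exp_add, hexpa, Complex.exp_log h1u_ne, mul_one] at h5
    exact h5.symm
  -- imaginary part bound
  have himb : |u.im - t| ≤ 1 + Real.pi / 2 := by
    have hu := huD
    rw [hD_def, Metric.mem_closedBall, dist_eq_norm] at hu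
    have him : |(u - c).im| ≤ 1 := le_trans (Complex.abs_im_le_norm _) hu
    rw [Complex.sub_im] at him
    have h2 := abs_le.1 him
    rw [hc_im] at h2
    rw [abs_le]
    constructor <;> [linarith [h2.1]; linarith [h2.2, harg2, harg0]]
  have hune : u ≠ 0 := by
    intro h
    rw [h] at himb
    simp only [Complex.zero_im, zero_sub, abs_neg] at himb
    rw [_root_.abs_of_nonneg (by linarith : (0:ℝ) ≤ t)] at himb
    linarith
  exact ⟨u, ⟨hune, hexp⟩, himb⟩

theorem stmt_10 : {u : ℂ | u ≠ 0 ∧ Complex.exp u = 1 + u}.Infinite := by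
  choose g hg₁ hg₂ using key_sol
  apply Set.infinite_of_injective_forall_mem (f := g)
  · intro n m hnm
    have h1 := hg₂ n
    have h2 := hg₂ m
    rw [hnm] at h1
    have hπ3 : (3:ℝ) < Real.pi := Real.pi_gt_three
    have h3 : |2*Real.pi*((n:ℝ)+10) - 2*Real.pi*((m:ℝ)+10)| ≤ 2 + Real.pi := by
      calc |2*Real.pi*((n:ℝ)+10) - 2*Real.pi*((m:ℝ)+10)|
          = |((g m).im - 2*Real.pi*((m:ℝ)+10)) - ((g m).im - 2*Real.pi*((n:ℝ)+10))| := by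
            congr 1; ring
      _ ≤ |(g m).im - 2*Real.pi*((m:ℝ)+10)| + |(g m).im - 2*Real.pi*((n:ℝ)+10)| := abs_sub _ _
      _ ≤ (1 + Real.pi/2) + (1 + Real.pi/2) := add_le_add h2 h1
      _ = 2 + Real.pi := by ring
    have h4 : |2*Real.pi*((n:ℝ)+10) - 2*Real.pi*((m:ℝ)+10)| = 2*Real.pi*|(n:ℝ) - (m:ℝ)| := by
      rw [show 2*Real.pi*((n:ℝ)+10) - 2*Real.pi*((m:ℝ)+10) = 2*Real.pi*((n:ℝ)-(m:ℝ)) by ring,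
        abs_mul, _root_.abs_of_nonneg (by positivity : (0:ℝ) ≤ 2*Real.pi)]
    rw [h4] at h3
    have h5 : |(n:ℝ) - (m:ℝ)| < 1 := by nlinarith [abs_nonneg ((n:ℝ) - (m:ℝ))]
    have h6 := abs_lt.1 h5
    have h7 : (n:ℝ) < (m:ℝ) + 1 := by linarith [h6.2]
    have h8 : (m:ℝ) < (n:ℝ) + 1 := by linarith [h6.1]
    have h7' : n < m + 1 := by exact_mod_cast h7
    have h8' : m < n + 1 := by exact_mod_cast h8
    omega
  · exact hg₁
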